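/- Under the setup: encoder output E = f(d) ∈ ℝ^{L×N}, decoder g(z) = σ(zW) with linear normalization σ and semi-orthogonal W (W W^T = I_N), the encoder-decoder cooperation condition f(d) = g^{-1}(d) (i.e., σ(EW) reconstructs the document one-hot matrix d after normalization, meaning σ^{-1}(d)W^T = E), and k_l = Σ_d (EW)_{l,d} ∈ (0,1): the MLM-loss gradient ∂L₁/∂E = −(1/L)·1_{L×L}·[σ(EW) − d]·W^T satisfies ∂L₁/∂E = −(1/L)·1_{L×L}·diag((1−k_l)/k_l)·E. -/

import Mathlib

open Matrix BigOperators

/-- MLM gradient identity: under semi-orthogonality, encoder-decoder cooperation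
(d·Wᵀ = E) and row sums k_l ∈ (0,1) of E·W,
−(1/L)·1_{L×L}·(σ(EW) − d)·Wᵀ = −(1/L)·1_{L×L}·diag((1−k)/k)·E. -/
theorem mlm_gradient_identity
    {L N D : ℕ}
    (E : Matrix (Fin L) (Fin N) ℝ) (W : Matrix (Fin N) (Fin D) ℝ)
    (d : Matrix (Fin L) (Fin D) ℝ)
    (hW : W * W.transpose = 1)
    (hcoop : d * W.transpose = E)
    (k : Fin L → ℝ) (hk : ∀ l, k l = ∑ j, (E * W) l j)
    (hk01 : ∀ l, 0 < k l ∧ k l < 1) :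
    (-(1 / (L : ℝ))) •
        ((Matrix.of fun (_ : Fin L) (_ : Fin L) => (1 : ℝ)) *
          ((Matrix.of fun l j => (E * W) l j / k l) - d) * W.transpose) =
      (-(1 / (L : ℝ))) •
        ((Matrix.of fun (_ : Fin L) (_ : Fin L) => (1 : ℝ)) *
          Matrix.diagonal (fun l => (1 - k l) / k l) * E) := by
  have hσ : (Matrix.of fun l j => (E * W) l j / k l)
      = Matrix.diagonal (fun l => (k l)⁻¹) * (E * W) := by
    ext i j
    simp [Matrix.diagonal_mul, div_eq_inv_mul]
  have hmid : ((Matrix.of fun l j => (E * W) l j / k l) - d) * W.transpose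
      = Matrix.diagonal (fun l => (1 - k l) / k l) * E := by
    rw [hσ, Matrix.sub_mul, Matrix.mul_assoc, Matrix.mul_assoc, hW, Matrix.mul_one, hcoop]
    ext i j
    have hk0 : k i ≠ 0 := ne_of_gt (hk01 i).1
    simp [Matrix.diagonal_mul, Matrix.sub_apply]
    field_simp
  rw [Matrix.mul_assoc, hmid, Matrix.mul_assoc]
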